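/- Let (u*, v*) with u*, v* > 0 satisfy Λ = λu*φ(v*) + μu* and σ = λu*φ(v*)/v*, where φ satisfies 0 < v·φ'(v) ≤ φ(v) for v > 0. Then the trace of the Jacobian J(u*,v*) = [[-λφ(v*) - μ, -λu*φ'(v*)], [λφ(v*), λu*φ'(v*) - σ]] satisfies tr J(u*,v*) = -Λ/u* - λu*(φ(v*)/v* - φ'(v*)) < 0. -/
import Mathlib


/-- At a positive endemic equilibrium `(u*, v*)`, the trace of the Jacobian equals
`-Λ/u* - λu*(φ(v*)/v* - φ'(v*))` and is negative. -/
theorem stmt_10 (φ : ℝ → ℝ) (Λ μ σ lam ustar vstar : ℝ)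
    (hΛ : 0 < Λ) (hμ : 0 < μ) (hσ : 0 < σ) (hlam : 0 < lam)
    (hu : 0 < ustar) (hv : 0 < vstar)
    (hdiff : ∀ v ∈ Set.Ioi (0:ℝ), DifferentiableAt ℝ φ v)
    (hinc : ∀ v : ℝ, 0 < v → 0 < v * deriv φ v ∧ v * deriv φ v ≤ φ v)
    (heq1 : Λ = lam * ustar * φ vstar + μ * ustar)
    (heq2 : σ = lam * ustar * φ vstar / vstar) :
    Matrix.trace !![-(lam * φ vstar) - μ, -(lam * ustar * deriv φ vstar);
        lam * φ vstar, lam * ustar * deriv φ vstar - σ]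
      = -(Λ / ustar) - lam * ustar * (φ vstar / vstar - deriv φ vstar) ∧
    Matrix.trace !![-(lam * φ vstar) - μ, -(lam * ustar * deriv φ vstar);
        lam * φ vstar, lam * ustar * deriv φ vstar - σ] < 0 := by
  obtain ⟨h1, h2⟩ := hinc vstar hv
  have hφ : 0 < φ vstar := lt_of_lt_of_le h1 h2
  have hderiv_le : deriv φ vstar ≤ φ vstar / vstar := by
    rw [le_div_iff₀ hv]; linarith [h2]
  have htr : Matrix.trace !![-(lam * φ vstar) - μ, -(lam * ustar * deriv φ vstar);
      lam * φ vstar, lam * ustar * deriv φ vstar - σ]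
      = -(Λ / ustar) - lam * ustar * (φ vstar / vstar - deriv φ vstar) := by
    simp [Matrix.trace_fin_two, heq2, heq1]
    field_simp
    ring
  refine ⟨htr, ?_⟩
  rw [htr]
  have h3 : 0 ≤ lam * ustar * (φ vstar / vstar - deriv φ vstar) := by
    apply mul_nonneg (by positivity); linarith
  have h4 : 0 < Λ / ustar := div_pos hΛ hu
  linarith
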